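/- Let D(s) = ∑_{n≥1} a n · n^(-s) be a Dirichlet series converging on {s | re s > σ} that is not constant, and assume a 1 ≠ 0 is allowed. Then |a 1| < sup_{re s > σ} |D(s)|. -/

import Mathlib

open Complex Finset Filter

theorem stmt_13 (a : ℕ → ℂ) (σ : ℝ)
    (hconv : ∀ s : ℂ, σ < s.re → Summable (fun n : ℕ => a (n + 1) * ((n + 1 : ℕ) : ℂ) ^ (-s)))
    (hnonconst : ∃ k : ℕ, 2 ≤ k ∧ a k ≠ 0) :
    ∃ s : ℂ, σ < s.re ∧ ‖a 1‖ < ‖∑' n : ℕ, a (n + 1) * ((n + 1 : ℕ) : ℂ) ^ (-s)‖ := by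
  classical
  set k := Nat.find hnonconst with hkdef
  obtain ⟨hk2, hak⟩ : 2 ≤ k ∧ a k ≠ 0 := Nat.find_spec hnonconst
  have hmin : ∀ j, 2 ≤ j → j < k → a j = 0 := by
    intro j h2 hj
    have := Nat.find_min hnonconst hj
    push_neg at this
    exact this h2
  have hk2R : (2:ℝ) ≤ (k:ℝ) := by exact_mod_cast hk2
  have hkpos : (0:ℝ) < (k:ℝ) := by linarith
  have hk1pos : (0:ℝ) < (k:ℝ) + 1 := by linarith
  -- bound at σ+1
  have hs1 : Summable (fun n : ℕ => a (n + 1) * ((n + 1 : ℕ) : ℂ) ^ (-((σ+1:ℝ):ℂ))) := by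
    apply hconv
    simp
  obtain ⟨B, hB⟩ : ∃ B : ℝ, ∀ n : ℕ,
      ‖a (n + 1) * ((n + 1 : ℕ) : ℂ) ^ (-((σ+1:ℝ):ℂ))‖ ≤ B := by
    have h0 := (hs1.tendsto_atTop_zero.norm)
    simp only [norm_zero] at h0
    obtain ⟨B, hB⟩ := h0.bddAbove_range
    exact ⟨B, fun n => hB (Set.mem_range_self n)⟩
  have hB0 : 0 ≤ B := le_trans (norm_nonneg _) (hB 0)
  -- summable tail majorant
  have hC2sum : Summable (fun n : ℕ => ((n + k + 1 : ℕ) : ℝ) ^ (-2 : ℝ)) := by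
    have h := ((Real.summable_nat_rpow (p := (-2:ℝ))).mpr (by norm_num)).comp_injective
      (fun m n h => by simpa using h : Function.Injective (fun n : ℕ => n + k + 1))
    simpa [Function.comp_def] using h
  set C2 : ℝ := ∑' n : ℕ, ((n + k + 1 : ℕ) : ℝ) ^ (-2 : ℝ) with hC2def
  have hC20 : 0 ≤ C2 := tsum_nonneg fun n => by positivity
  -- norm of coefficient terms
  have hnorm : ∀ (s : ℂ) (m : ℕ),
      ‖a (m + 1) * ((m + 1 : ℕ) : ℂ) ^ (-s)‖ = ‖a (m + 1)‖ * ((m + 1 : ℕ) : ℝ) ^ (-s.re) := by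
    intro s m
    rw [norm_mul, norm_natCast_cpow_of_pos (Nat.succ_pos m), neg_re]
  -- per-term tail bound
  have hterm : ∀ (s : ℂ), σ + 3 ≤ s.re → ∀ n : ℕ,
      ‖a (n + k + 1) * ((n + k + 1 : ℕ) : ℂ) ^ (-s)‖ ≤
        B * ((k:ℝ) + 1) ^ (σ + 3 - s.re) * ((n + k + 1 : ℕ) : ℝ) ^ (-2 : ℝ) := by
    intro s hx n
    have hmpos : (0:ℝ) < ((n + k + 1 : ℕ) : ℝ) := by positivity
    have hsplit : ((n + k + 1 : ℕ) : ℝ) ^ (-s.re)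
        = ((n + k + 1 : ℕ) : ℝ) ^ (-(σ+1)) * ((n + k + 1 : ℕ) : ℝ) ^ (σ + 3 - s.re)
          * ((n + k + 1 : ℕ) : ℝ) ^ (-2 : ℝ) := by
      rw [← Real.rpow_add hmpos, ← Real.rpow_add hmpos]
      ring_nf
    have h1 : ‖a (n + k + 1)‖ * ((n + k + 1 : ℕ) : ℝ) ^ (-(σ+1)) ≤ B := by
      have := hB (n + k)
      rw [hnorm] at this
      simpa using this
    have h2 : ((n + k + 1 : ℕ) : ℝ) ^ (σ + 3 - s.re) ≤ ((k:ℝ) + 1) ^ (σ + 3 - s.re) := by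
      apply Real.rpow_le_rpow_of_nonpos hk1pos
      · push_cast; linarith [Nat.cast_nonneg (α := ℝ) n]
      · linarith
    rw [hnorm, hsplit, ← mul_assoc, ← mul_assoc]
    have hn0 : (0:ℝ) ≤ ‖a (n + k + 1)‖ * ((n + k + 1 : ℕ) : ℝ) ^ (-(σ+1)) := by positivity
    gcongr
  -- tail bound
  have htailbound : ∀ (s : ℂ), σ + 3 ≤ s.re →
      ‖∑' n : ℕ, a (n + k + 1) * ((n + k + 1 : ℕ) : ℂ) ^ (-s)‖ ≤
        B * ((k:ℝ) + 1) ^ (σ + 3 - s.re) * C2 :=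
    fun s hx => tsum_of_norm_bounded ((hC2sum.hasSum).mul_left _) (hterm s hx)
  -- finite part
  have hfin : ∀ s : ℂ, ∑ i ∈ range k, a (i + 1) * ((i + 1 : ℕ) : ℂ) ^ (-s)
      = a 1 + a k * ((k:ℕ):ℂ) ^ (-s) := by
    intro s
    have hsub : ({0, k-1} : Finset ℕ) ⊆ range k := by
      intro i hi
      simp only [Finset.mem_insert, Finset.mem_singleton] at hi
      rcases hi with rfl|rfl <;> simp [Finset.mem_range] <;> omega
    have hzero : ∀ i ∈ range k, i ∉ ({0, k-1} : Finset ℕ) →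
        a (i + 1) * ((i + 1 : ℕ) : ℂ) ^ (-s) = 0 := by
      intro i hi hni
      simp only [Finset.mem_insert, Finset.mem_singleton, not_or] at hni
      rw [Finset.mem_range] at hi
      rw [hmin (i+1) (by omega) (by omega), zero_mul]
    rw [← Finset.sum_subset hsub hzero, Finset.sum_pair (by omega : (0:ℕ) ≠ k-1)]
    have hkk : k - 1 + 1 = k := by omega
    rw [hkk]
    norm_num [one_cpow]
  -- phase choice
  set t : ℝ := (arg (a k) - arg (a 1)) / Real.log k with htdef
  have hlogk : Real.log k ≠ 0 := ne_of_gt (Real.log_pos (by linarith))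
  have hkcpow : ∀ x : ℝ, ((k:ℕ):ℂ) ^ (-((x:ℂ) + t * I)) =
      (((k:ℝ) ^ (-x) : ℝ) : ℂ) * Complex.exp (((arg (a 1) - arg (a k) : ℝ)) * I) := by
    intro x
    have hk0 : ((k:ℕ):ℂ) ≠ 0 := Nat.cast_ne_zero.mpr (by omega)
    rw [Complex.cpow_def_of_ne_zero hk0, ← Complex.natCast_log,
      Real.rpow_def_of_pos hkpos, Complex.ofReal_exp, ← Complex.exp_add]
    congr 1
    have htR : t * Real.log k = arg (a k) - arg (a 1) := div_mul_cancel₀ _ hlogk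
    have ht : (t:ℂ) * (Real.log k : ℂ) = ((arg (a k) : ℝ) : ℂ) - ((arg (a 1) : ℝ) : ℂ) := by
      exact_mod_cast congrArg (fun r : ℝ => (r : ℂ)) htR
    push_cast
    rw [← Complex.natCast_log]
    linear_combination (-I) * ht
  have hheadnorm : ∀ x : ℝ, ‖a 1 + a k * ((k:ℕ):ℂ) ^ (-((x:ℂ) + t * I))‖
      = ‖a 1‖ + ‖a k‖ * (k:ℝ) ^ (-x) := by
    intro x
    have hE : Complex.exp (((arg (a k) : ℝ)) * I) *
        Complex.exp (((arg (a 1) - arg (a k) : ℝ)) * I)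
        = Complex.exp (((arg (a 1) : ℝ)) * I) := by
      rw [← Complex.exp_add]; congr 1; push_cast; ring
    have hhead : a 1 + a k * ((k:ℕ):ℂ) ^ (-((x:ℂ) + t * I))
        = (((‖a 1‖ + ‖a k‖ * (k:ℝ) ^ (-x) : ℝ)) : ℂ) *
          Complex.exp (((arg (a 1) : ℝ)) * I) := by
      rw [hkcpow]
      nth_rewrite 1 [← Complex.norm_mul_exp_arg_mul_I (a 1)]
      nth_rewrite 1 [← Complex.norm_mul_exp_arg_mul_I (a k)]
      push_cast
      push_cast at hE
      linear_combination ((‖a k‖ : ℂ) * (((k:ℝ) ^ (-x) : ℝ) : ℂ)) * hE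
    rw [hhead, norm_mul]
    simp only [Complex.norm_exp_ofReal_mul_I, mul_one, Complex.norm_real, Real.norm_eq_abs]
    exact abs_of_nonneg (by positivity)
  -- choose x
  have hak0 : 0 < ‖a k‖ := norm_pos_iff.mpr hak
  have hb1 : 1 < ((k:ℝ)+1)/(k:ℝ) := by rw [lt_div_iff₀ hkpos]; linarith
  obtain ⟨x, hx1, hx2⟩ : ∃ x : ℝ, σ + 3 ≤ x ∧
      (B * C2 * ((k:ℝ)+1) ^ (σ+3) / ‖a k‖) < (((k:ℝ)+1)/(k:ℝ)) ^ x := by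
    have hbt : Tendsto (fun x : ℝ => (((k:ℝ)+1)/(k:ℝ)) ^ x) atTop atTop := by
      have hlb : 0 < Real.log (((k:ℝ)+1)/(k:ℝ)) := Real.log_pos hb1
      simp_rw [Real.rpow_def_of_pos (by positivity : (0:ℝ) < ((k:ℝ)+1)/(k:ℝ))]
      exact Real.tendsto_exp_atTop.comp ((tendsto_const_mul_atTop_of_pos hlb).mpr tendsto_id)
    have h := (hbt.eventually_gt_atTop
      (B * C2 * ((k:ℝ)+1) ^ (σ+3) / ‖a k‖)).and (eventually_ge_atTop (σ + 3))
    obtain ⟨x, hx⟩ := h.exists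
    exact ⟨x, hx.2, hx.1⟩
  have hkey : B * C2 * ((k:ℝ)+1) ^ (σ + 3 - x) < ‖a k‖ * (k:ℝ) ^ (-x) := by
    rw [div_lt_iff₀ hak0] at hx2
    have hmul := mul_lt_mul_of_pos_right hx2 (Real.rpow_pos_of_pos hk1pos (-x))
    calc B * C2 * ((k:ℝ)+1) ^ (σ+3-x)
        = B * C2 * ((k:ℝ)+1) ^ (σ+3) * ((k:ℝ)+1) ^ (-x) := by
          rw [mul_assoc (B * C2), ← Real.rpow_add hk1pos]; ring_nf
      _ < (((k:ℝ)+1)/(k:ℝ)) ^ x * ‖a k‖ * ((k:ℝ)+1) ^ (-x) := hmul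
      _ = ‖a k‖ * (k:ℝ) ^ (-x) := by
          rw [Real.div_rpow (by linarith) (le_of_lt hkpos),
            Real.rpow_neg (le_of_lt hk1pos), Real.rpow_neg (le_of_lt hkpos)]
          have h1 := (Real.rpow_pos_of_pos hk1pos x).ne'
          have h2 := (Real.rpow_pos_of_pos hkpos x).ne'
          field_simp
  -- assemble
  refine ⟨(x:ℂ) + t * I, ?_, ?_⟩
  · simp only [Complex.add_re, Complex.ofReal_re, Complex.mul_re, Complex.I_re,
      Complex.ofReal_im, Complex.I_im]
    simp
    linarith
  · have hsre : ((x:ℂ) + t * I).re = x := by simp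
    have hσ : σ < ((x:ℂ) + t * I).re := by rw [hsre]; linarith
    have hsum := hconv _ hσ
    have hsplit := Summable.sum_add_tsum_nat_add' ((summable_nat_add_iff k).2 hsum)
    rw [← hsplit, hfin]
    have hT := htailbound ((x:ℂ) + t * I) (by rw [hsre]; linarith)
    rw [hsre] at hT
    have h2 := hheadnorm x
    set A := a 1 + a k * ((k:ℕ):ℂ) ^ (-((x:ℂ) + t * I)) with hA
    set T := ∑' n : ℕ, a (n + k + 1) * ((n + k + 1 : ℕ) : ℂ) ^ (-((x:ℂ) + t * I)) with hTdef
    have h1 : ‖A‖ ≤ ‖A + T‖ + ‖T‖ := by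
      calc ‖A‖ = ‖A + T - T‖ := by ring_nf
        _ ≤ ‖A + T‖ + ‖T‖ := norm_sub_le _ _
    have horder : B * ((k:ℝ)+1) ^ (σ+3-x) * C2 = B * C2 * ((k:ℝ)+1) ^ (σ+3-x) := by ring
    rw [horder] at hT
    linarith
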